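/- For the threshold policy with threshold X̄ ∈ {1,2,...} and arrival probability p ∈ (0,1], the stationary distribution ξ of the post-action age Markov chain (which increases by 1 deterministically for ages 1,...,X̄−1, and from any age i ≥ X̄ resets to 1 with probability p or increases by 1 with probability 1−p) is given by ξ_i = 1/(X̄ + (1−p)/p) for i = 1,...,X̄ and ξ_i = (1−p)^{i−X̄}/(X̄ + (1−p)/p) for i > X̄; in particular these values are nonnegative and sum to 1, and they satisfy the balance equations of the chain. -/

import Mathlib

/-- Stationary distribution of the post-action-age Markov chain under the
threshold policy with threshold `X` and arrival probability `p`. -/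
theorem stmt_0 (p : ℝ) (hp : 0 < p) (hp1 : p ≤ 1) (X : ℕ) (hX : 1 ≤ X)
    (ξ : ℕ → ℝ)
    (hξ : ∀ i, 1 ≤ i →
      ξ i = if i ≤ X then 1 / ((X : ℝ) + (1 - p) / p)
            else (1 - p) ^ (i - X) / ((X : ℝ) + (1 - p) / p)) :
    (∀ i, 1 ≤ i → 0 ≤ ξ i) ∧
    (∑' i : ℕ, (if 1 ≤ i then ξ i else 0)) = 1 ∧
    ξ 1 = (∑' i : ℕ, (if X ≤ i then p * ξ i else 0)) ∧
    (∀ j, 2 ≤ j → ξ j = if j - 1 < X then ξ (j - 1) else (1 - p) * ξ (j - 1)) := by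
  have hp' : (0:ℝ) ≤ 1 - p := by linarith
  have hr : (1:ℝ) - p < 1 := by linarith
  have hq : (0:ℝ) ≤ (1 - p) / p := div_nonneg hp' hp.le
  have hX1 : (1:ℝ) ≤ (X:ℝ) := by exact_mod_cast hX
  set D : ℝ := (X : ℝ) + (1 - p) / p with hDdef
  have hD : 0 < D := by dsimp [D]; linarith
  have hgeo : ∑' k : ℕ, (1 - p) ^ k = p⁻¹ := by
    rw [tsum_geometric_of_lt_one hp' hr]
    congr 1; ring
  have hgeoS : Summable (fun k : ℕ => (1 - p) ^ k) :=
    summable_geometric_of_lt_one hp' hr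
  refine ⟨?_, ?_, ?_, ?_⟩
  · intro i hi
    rw [hξ i hi]
    split_ifs
    · positivity
    · positivity
  · -- total mass 1
    set f : ℕ → ℝ := fun i => if 1 ≤ i then ξ i else 0 with hf
    have hf1 : ∀ k : ℕ, f (k + (X + 1)) = (1 - p) ^ (k + 1) / D := by
      intro k
      have h1 : 1 ≤ k + (X + 1) := by omega
      have h2 : ¬ (k + (X + 1) ≤ X) := by omega
      simp only [hf, if_pos h1, hξ _ h1, if_neg h2]
      congr 2
      omega
    have hsum2 : Summable (fun k : ℕ => f (k + (X + 1))) := by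
      apply Summable.congr ((hgeoS.mul_right (1 - p)).div_const D)
      intro k
      rw [hf1 k, pow_succ]
    have key := hsum2.sum_add_tsum_nat_add'
    have hfin : ∑ i ∈ Finset.range (X + 1), f i = (X : ℝ) * (1 / D) := by
      rw [Finset.sum_range_succ']
      have : ∀ i ∈ Finset.range X, f (i + 1) = 1 / D := by
        intro i hi
        simp only [Finset.mem_range] at hi
        have h1 : 1 ≤ i + 1 := by omega
        have h2 : i + 1 ≤ X := by omega
        simp only [hf, if_pos h1, hξ _ h1, if_pos h2]
      rw [Finset.sum_congr rfl this, Finset.sum_const, Finset.card_range]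
      simp [hf]
    have htail : ∑' k : ℕ, f (k + (X + 1)) = (1 - p) / p / D := by
      have : ∑' k : ℕ, f (k + (X + 1)) = ∑' k : ℕ, ((1 - p) ^ k * (1 - p)) / D := by
        apply tsum_congr; intro k; rw [hf1 k, pow_succ]
      rw [this, tsum_div_const, tsum_mul_right, hgeo]
      field_simp
    rw [← key, hfin, htail]
    have : (X:ℝ) * (1 / D) + (1 - p) / p / D = ((X:ℝ) + (1 - p) / p) / D := by ring
    rw [this, ← hDdef, div_self hD.ne']
  · -- balance at state 1
    set g : ℕ → ℝ := fun i => if X ≤ i then p * ξ i else 0 with hg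
    have hg1 : ∀ k : ℕ, g (k + X) = p * (1 - p) ^ k / D := by
      intro k
      have h1 : 1 ≤ k + X := by omega
      have h2 : X ≤ k + X := by omega
      simp only [hg, if_pos h2, hξ _ h1]
      rcases Nat.eq_zero_or_pos k with hk | hk
      · subst hk
        simp [div_eq_mul_inv]
      · have h3 : ¬ (k + X ≤ X) := by omega
        rw [if_neg h3]
        have : k + X - X = k := by omega
        rw [this]
        ring
    have hsum2 : Summable (fun k : ℕ => g (k + X)) := by
      apply Summable.congr ((hgeoS.mul_left p).div_const D)
      intro k; rw [hg1 k]
    have key := hsum2.sum_add_tsum_nat_add'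
    have hfin : ∑ i ∈ Finset.range X, g i = 0 := by
      apply Finset.sum_eq_zero
      intro i hi
      simp only [Finset.mem_range] at hi
      simp [hg, Nat.not_le.mpr hi]
    have htail : ∑' k : ℕ, g (k + X) = 1 / D := by
      have : ∑' k : ℕ, g (k + X) = ∑' k : ℕ, (p * (1 - p) ^ k) / D := by
        apply tsum_congr; intro k; rw [hg1 k]
      rw [this, tsum_div_const, tsum_mul_left, hgeo]
      field_simp
    have hξ1 : ξ 1 = 1 / D := by
      rw [hξ 1 le_rfl, if_pos hX]
    rw [hξ1, ← key, hfin, htail, zero_add]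
  · -- balance at states j ≥ 2
    intro j hj
    have hj1 : 1 ≤ j := by omega
    have hj11 : 1 ≤ j - 1 := by omega
    rw [hξ j hj1, hξ (j - 1) hj11]
    by_cases hc : j - 1 < X
    · rw [if_pos hc, if_pos (by omega : j ≤ X), if_pos (by omega : j - 1 ≤ X)]
    · rw [if_neg hc]
      have hjX : ¬ (j ≤ X) := by omega
      rw [if_neg hjX]
      by_cases hc2 : j - 1 ≤ X
      · have hjx : j - X = 1 := by omega
        rw [if_pos hc2, hjx, pow_one]
        ring
      · rw [if_neg hc2]
        have : j - X = (j - 1 - X) + 1 := by omega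
        rw [this, pow_succ]
        ring
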